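/- Let Φ : I → ℝ be a convex function on an interval I of positive real numbers that is continuously differentiable on the interior of I, let T, V be bounded linear invertible operators on a complex Hilbert space H, and let 0 < m < M with [m², M²] contained in the interior of I and m‖Tx‖ ≤ ‖Vx‖ ≤ M‖Tx‖ for all x ∈ H. Then for every t in the interior of I, in the operator order: ⊙_Φ(V,T) ≤ Φ(t)|T|² + ⊙_{Φ'·ℓ}(V,T) − t·⊙_{Φ'}(V,T), where ℓ is the identity function, i.e. ⊙_{Φ'·ℓ}(V,T) = T* (Φ'(X)·X) T and ⊙_{Φ'}(V,T) = T* Φ'(X) T with X = |VT⁻¹|². -/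

import Mathlib

variable {H : Type*} [NormedAddCommGroup H] [InnerProductSpace ℂ H] [CompleteSpace H]

/-- `X = |VT⁻¹|² = (T*)⁻¹ V* V T⁻¹`. -/
noncomputable def qX (V T : (H →L[ℂ] H)ˣ) : H →L[ℂ] H :=
  star (↑(T⁻¹) : H →L[ℂ] H) * (star (V : H →L[ℂ] H) * (V : H →L[ℂ] H)) * (↑(T⁻¹) : H →L[ℂ] H)

/-- The quadratic operator perspective `⊙_Φ(V,T) = T* Φ(X) T`. -/
noncomputable def qPersp (Φ : ℝ → ℝ) (V T : (H →L[ℂ] H)ˣ) : H →L[ℂ] H :=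
  star (T : H →L[ℂ] H) * cfc Φ (qX V T) * (T : H →L[ℂ] H)

/-- `|T|² = T*T`. -/
noncomputable def modSq (T : (H →L[ℂ] H)ˣ) : H →L[ℂ] H :=
  star (T : H →L[ℂ] H) * (T : H →L[ℂ] H)

private lemma aux_algebraMap_le (r : ℝ) (f : H →L[ℂ] H) (hf : IsSelfAdjoint f)
    (h : ∀ z : H, r * ‖z‖ ^ 2 ≤ RCLike.re (inner ℂ (f z) z : ℂ)) :
    algebraMap ℝ (H →L[ℂ] H) r ≤ f := by
  rw [Algebra.algebraMap_eq_smul_one, ContinuousLinearMap.le_def]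
  refine ⟨(hf.sub ((IsSelfAdjoint.all r).smul (.one _))).isSymmetric, fun y => ?_⟩
  have h2 : RCLike.re (inner ℂ ((r • (1 : H →L[ℂ] H)) y) y : ℂ) = r * ‖y‖ ^ 2 := by
    rw [ContinuousLinearMap.smul_apply, ContinuousLinearMap.one_apply,
      RCLike.real_smul_eq_coe_smul (K := ℂ), inner_smul_real_left, RCLike.smul_re,
      inner_self_eq_norm_sq]
  simp only [ContinuousLinearMap.reApplyInnerSelf, ContinuousLinearMap.sub_apply, inner_sub_left,
    map_sub]
  rw [h2]
  linarith [h y]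

private lemma aux_le_algebraMap (r : ℝ) (f : H →L[ℂ] H) (hf : IsSelfAdjoint f)
    (h : ∀ z : H, RCLike.re (inner ℂ (f z) z : ℂ) ≤ r * ‖z‖ ^ 2) :
    f ≤ algebraMap ℝ (H →L[ℂ] H) r := by
  rw [Algebra.algebraMap_eq_smul_one, ContinuousLinearMap.le_def]
  refine ⟨(((IsSelfAdjoint.all r).smul (.one _)).sub hf).isSymmetric, fun y => ?_⟩
  have h2 : RCLike.re (inner ℂ ((r • (1 : H →L[ℂ] H)) y) y : ℂ) = r * ‖y‖ ^ 2 := by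
    rw [ContinuousLinearMap.smul_apply, ContinuousLinearMap.one_apply,
      RCLike.real_smul_eq_coe_smul (K := ℂ), inner_smul_real_left, RCLike.smul_re,
      inner_self_eq_norm_sq]
  simp only [ContinuousLinearMap.reApplyInnerSelf, ContinuousLinearMap.sub_apply, inner_sub_left,
    map_sub]
  rw [h2]
  linarith [h y]

theorem stmt7 (I : Set ℝ) (hIpos : I ⊆ Set.Ioi 0)
    (Φ Φ' : ℝ → ℝ) (hΦ : ConvexOn ℝ I Φ)
    (hΦ' : ∀ s ∈ interior I, HasDerivAt Φ (Φ' s) s)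
    (hΦ'c : ContinuousOn Φ' (interior I))
    (T V : (H →L[ℂ] H)ˣ) (m M : ℝ) (hm : 0 < m) (hmM : m < M)
    (hsub : Set.Icc (m ^ 2) (M ^ 2) ⊆ interior I)
    (hTV : ∀ x : H, m * ‖(T : H →L[ℂ] H) x‖ ≤ ‖(V : H →L[ℂ] H) x‖ ∧ ‖(V : H →L[ℂ] H) x‖ ≤ M * ‖(T : H →L[ℂ] H) x‖)
    (t : ℝ) (ht : t ∈ interior I) :
    qPersp Φ V T ≤
      Φ t • modSq T + qPersp (fun s => Φ' s * s) V T - t • qPersp Φ' V T := by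
  set X := qX V T with hXdef
  set B : H →L[ℂ] H := (V : H →L[ℂ] H) * (↑(T⁻¹) : H →L[ℂ] H) with hBdef
  have hXB : X = star B * B := by
    simp [hXdef, qX, hBdef, star_mul, mul_assoc]
  have hXsa : IsSelfAdjoint X := hXB ▸ IsSelfAdjoint.star_mul_self B
  have hinner : ∀ y : H, RCLike.re (inner ℂ (X y) y : ℂ) = ‖B y‖ ^ 2 := by
    intro y
    have h1 : X y = (star B) (B y) := by rw [hXB]; rfl
    rw [h1, ContinuousLinearMap.star_eq_adjoint, ContinuousLinearMap.adjoint_inner_left]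
    exact inner_self_eq_norm_sq _
  have hBy : ∀ y : H, m * ‖y‖ ≤ ‖B y‖ ∧ ‖B y‖ ≤ M * ‖y‖ := by
    intro y
    have hT : (T : H →L[ℂ] H) ((↑(T⁻¹) : H →L[ℂ] H) y) = y := by
      rw [← ContinuousLinearMap.mul_apply, T.mul_inv, ContinuousLinearMap.one_apply]
    have h := hTV ((↑(T⁻¹) : H →L[ℂ] H) y)
    rw [hT] at h
    exact h
  have hlow : algebraMap ℝ (H →L[ℂ] H) (m ^ 2) ≤ X := by
    refine aux_algebraMap_le _ _ hXsa fun z => ?_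
    rw [hinner z]
    have h1 := (hBy z).1
    nlinarith [mul_self_le_mul_self (by positivity : (0:ℝ) ≤ m * ‖z‖) h1]
  have hup : X ≤ algebraMap ℝ (H →L[ℂ] H) (M ^ 2) := by
    refine aux_le_algebraMap _ _ hXsa fun z => ?_
    rw [hinner z]
    have h1 := (hBy z).2
    nlinarith [mul_self_le_mul_self (norm_nonneg (B z)) h1]
  have hspec : spectrum ℝ X ⊆ Set.Icc (m ^ 2) (M ^ 2) := fun s hs =>
    ⟨(algebraMap_le_iff_le_spectrum hXsa).mp hlow s hs,
     (le_algebraMap_iff_spectrum_le hXsa).mp hup s hs⟩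
  have hspecI : spectrum ℝ X ⊆ interior I := fun s hs => hsub (hspec hs)
  -- continuity facts
  have hΦcont : ContinuousOn Φ (spectrum ℝ X) := fun s hs =>
    ((hΦ' s (hspecI hs)).continuousAt).continuousWithinAt
  have hΦ'cont : ContinuousOn Φ' (spectrum ℝ X) := hΦ'c.mono hspecI
  have hmulcont : ContinuousOn (fun s => Φ' s * s) (spectrum ℝ X) :=
    hΦ'cont.mul continuousOn_id
  have hgcont : ContinuousOn (fun s => Φ t + Φ' s * s - t * Φ' s) (spectrum ℝ X) :=
    (continuousOn_const.add hmulcont).sub (continuousOn_const.mul hΦ'cont)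
  -- pointwise tangent-line inequality
  have hpt : ∀ s ∈ spectrum ℝ X, Φ s ≤ Φ t + Φ' s * s - t * Φ' s := by
    intro s hs
    have hsI : s ∈ interior I := hspecI hs
    have hsI' : s ∈ I := interior_subset hsI
    have htI' : t ∈ I := interior_subset ht
    rcases lt_trichotomy s t with h | h | h
    · have hslope := hΦ.le_slope_of_hasDerivAt hsI' htI' h (hΦ' s hsI)
      rw [slope_def_field] at hslope
      have h' : Φ' s * (t - s) ≤ Φ t - Φ s :=
        (le_div_iff₀ (sub_pos.mpr h)).mp hslope
      nlinarith
    · subst h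
      nlinarith [mul_comm (Φ' s) s]
    · have hslope := hΦ.slope_le_of_hasDerivAt htI' hsI' h (hΦ' s hsI)
      rw [slope_def_field] at hslope
      have h' : Φ s - Φ t ≤ Φ' s * (s - t) :=
        (div_le_iff₀ (sub_pos.mpr h)).mp hslope
      nlinarith
  have hcfc : cfc Φ X ≤ cfc (fun s => Φ t + Φ' s * s - t * Φ' s) X :=
    cfc_mono hpt hΦcont hgcont
  have hdec : cfc (fun s => Φ t + Φ' s * s - t * Φ' s) X =
      Φ t • (1 : H →L[ℂ] H) + cfc (fun s => Φ' s * s) X - t • cfc Φ' X := by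
    rw [cfc_sub (fun s => Φ t + Φ' s * s) (fun s => t * Φ' s) X
        (continuousOn_const.add hmulcont) (continuousOn_const.mul hΦ'cont),
      cfc_const_add (Φ t) (fun s => Φ' s * s) X hmulcont hXsa,
      cfc_const_mul t Φ' X hΦ'cont, Algebra.algebraMap_eq_smul_one]
  rw [hdec] at hcfc
  have hconj := star_left_conjugate_le_conjugate hcfc (T : H →L[ℂ] H)
  have heq : star (T : H →L[ℂ] H) *
      (Φ t • (1 : H →L[ℂ] H) + cfc (fun s => Φ' s * s) X - t • cfc Φ' X) * (T : H →L[ℂ] H) =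
      Φ t • modSq T + qPersp (fun s => Φ' s * s) V T - t • qPersp Φ' V T := by
    simp only [qPersp, modSq, ← hXdef, mul_add, add_mul, mul_sub, sub_mul, mul_smul_comm,
      smul_mul_assoc, mul_one]
  rw [heq] at hconj
  exact hconj
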